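/- Let (ℬ, 𝒜, i, e, r) be a cleft coextension of abelian categories and n ≥ 1. Then F'ⁿ = 0 if and only if G'ⁿ = 0. -/
import Mathlib


open CategoryTheory Limits

universe v u v' u'

/-- The `n`-th power of an endofunctor. -/
def fpow {C : Type u} [Category.{v} C] (G : C ⥤ C) : ℕ → (C ⥤ C)
  | 0 => 𝟭 C
  | n + 1 => fpow G n ⋙ G

/-- The cokernel of a split monomorphism is the kernel of the retraction. -/
noncomputable def cokernelIsoKernelRetraction {C : Type*} [Category C] [Abelian C]
    {X Z : C} (m : X ⟶ Z) (ρ : Z ⟶ X) (w : m ≫ ρ = 𝟙 X) :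
    cokernel m ≅ kernel ρ where
  hom := cokernel.desc m (kernel.lift ρ (𝟙 Z - ρ ≫ m)
      (by simp [Preadditive.sub_comp, Category.assoc, w]))
      (by
        ext
        simp [Preadditive.comp_sub, reassoc_of% w])
  inv := kernel.ι ρ ≫ cokernel.π m
  hom_inv_id := by
    apply coequalizer.hom_ext
    simp [Preadditive.sub_comp, cokernel.condition]
  inv_hom_id := by
    apply equalizer.hom_ext
    simp [Preadditive.comp_sub, kernel.condition]

/-- Let `(ℬ, 𝒜, i, e, r)` be a cleft coextension of abelian categories, with
induced endofunctors `G' : 𝒜 ⥤ 𝒜` (where `G'(A)` is the cokernel of the unit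
`ν'_A : A → r(e(A))`) and `F' : ℬ ⥤ ℬ` (where `F'(B) = e(G'(i(B)))`).  For every `n ≥ 1`,
`F'ⁿ = 0` if and only if `G'ⁿ = 0`. -/
theorem cleftCoextension_power_isZero_iff
    {𝒜 : Type u} [Category.{v} 𝒜] [Abelian 𝒜] [EnoughProjectives 𝒜]
    {ℬ : Type u'} [Category.{v'} ℬ] [Abelian ℬ] [EnoughProjectives ℬ]
    (i : ℬ ⥤ 𝒜) (e : 𝒜 ⥤ ℬ) (r : ℬ ⥤ 𝒜)
    [i.Additive] [e.Additive] [r.Additive]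
    [e.Faithful] [PreservesFiniteLimits e] [PreservesFiniteColimits e]
    (adj : e ⊣ r) (η : i ⋙ e ≅ 𝟭 ℬ)
    (G' : 𝒜 ⥤ 𝒜) (p : (e ⋙ r : 𝒜 ⥤ 𝒜) ⟶ G')
    (hp : ∀ X : 𝒜, adj.unit.app X ≫ p.app X = 0)
    (hcoker : ∀ X : 𝒜, IsColimit (CokernelCofork.ofπ (p.app X) (hp X)))
    (F' : ℬ ⥤ ℬ) (hF' : F' ≅ i ⋙ G' ⋙ e)
    (n : ℕ) (hn : 1 ≤ n) :
    (∀ B : ℬ, IsZero ((fpow F' n).obj B)) ↔ (∀ A : 𝒜, IsZero ((fpow G' n).obj A)) := by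
  -- `e` reflects and preserves zero objects
  have hzero : ∀ X : 𝒜, IsZero (e.obj X) ↔ IsZero X := by
    intro X
    rw [IsZero.iff_id_eq_zero, IsZero.iff_id_eq_zero]
    constructor
    · intro h
      apply e.map_injective
      rw [e.map_id, e.map_zero, h]
    · intro h
      rw [← e.map_id, h, e.map_zero]
  -- `e (G' X)` is the kernel of the counit at `e X`
  have eG' : ∀ X : 𝒜,
      Nonempty (e.obj (G'.obj X) ≅ kernel (adj.counit.app (e.obj X))) := by
    intro X
    refine ⟨?_ ≪≫ cokernelIsoKernelRetraction (e.map (adj.unit.app X))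
      (adj.counit.app (e.obj X)) (adj.left_triangle_components X)⟩
    exact IsColimit.coconePointUniqueUpToIso
      (isColimitCoforkMapOfIsColimit' e (hp X) (hcoker X))
      (colimit.isColimit (parallelPair (e.map (adj.unit.app X)) 0))
  -- key : e (G' (i (e X))) ≅ e (G' X)
  have key : ∀ X : 𝒜,
      Nonempty (e.obj (G'.obj (i.obj (e.obj X))) ≅ e.obj (G'.obj X)) := by
    intro X
    obtain ⟨a⟩ := eG' (i.obj (e.obj X))
    obtain ⟨b⟩ := eG' X
    refine ⟨a ≪≫ ?_ ≪≫ b.symm⟩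
    exact kernel.mapIso _ _ ((r ⋙ e).mapIso (η.app (e.obj X))) (η.app (e.obj X))
      (adj.counit.naturality (η.app (e.obj X)).hom).symm
  -- F'ⁿ (e X) ≅ e (G'ⁿ X)
  have pow : ∀ (m : ℕ) (X : 𝒜),
      Nonempty ((fpow F' m).obj (e.obj X) ≅ e.obj ((fpow G' m).obj X)) := by
    intro m
    induction m with
    | zero => exact fun X => ⟨Iso.refl _⟩
    | succ m ih =>
      intro X
      obtain ⟨a⟩ := ih X
      obtain ⟨b⟩ := key ((fpow G' m).obj X)
      exact ⟨F'.mapIso a ≪≫ hF'.app (e.obj ((fpow G' m).obj X)) ≪≫ b⟩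
  constructor
  · intro h A
    rw [← hzero]
    obtain ⟨a⟩ := pow n A
    exact (h (e.obj A)).of_iso a.symm
  · intro h B
    obtain ⟨a⟩ := pow n (i.obj B)
    refine IsZero.of_iso ?_ ((fpow F' n).mapIso (η.app B).symm ≪≫ a)
    rw [hzero]
    exact h (i.obj B)
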